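/- Let (S, τ) be a semi-frame for a ring R, let M be a finitely generated graded S-module that is projective as an S-module, and let N be a finitely generated graded S-module. A homomorphism f : N → M of graded S-modules is bijective if and only if its reduction f̄ : N ⊗_{S,ν} R → M ⊗_{S,ν} R is bijective. -/

import Mathlib

/-- A *semi-frame* `(S, τ)`: `S = ⨁ₙ Sₙ` a ℤ-graded commutative ring together with a
ring homomorphism `τ : S → S₀` (formalized as a ring endomorphism of `S` landing in
`𝒜 0`) such that `τ` restricted to `S₀` is the identity, `τ` restricted to `S₋ₙ` is a
bijection onto `S₀` for every `n ≥ 1`, and `τ(S₁)` is contained in the Jacobson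
radical of `S₀` (elementwise: `1 - τ(s)·y` is invertible in `S₀`). -/
structure SemiFrame {A : Type*} [CommRing A] (𝒜 : ℤ → AddSubgroup A)
    [GradedRing 𝒜] where
  tau : A →+* A
  tau_mem_zero : ∀ a : A, tau a ∈ 𝒜 0
  tau_id_zero : ∀ a ∈ 𝒜 0, tau a = a
  tau_inj_neg : ∀ n : ℕ, 1 ≤ n → ∀ a ∈ 𝒜 (-(n : ℤ)), ∀ b ∈ 𝒜 (-(n : ℤ)),
    tau a = tau b → a = b
  tau_surj_neg : ∀ n : ℕ, 1 ≤ n → ∀ c ∈ 𝒜 0, ∃ a ∈ 𝒜 (-(n : ℤ)), tau a = c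
  tau_S1_rad : ∀ s ∈ 𝒜 1, ∀ y ∈ 𝒜 0, ∃ z ∈ 𝒜 0, (1 - tau s * y) * z = 1

/-- The kernel of the ring homomorphism `ν : S → R = S₀/τ(S₁)` which is the canonical
projection `S₀ → R` in degree `0` and zero in all other degrees: the ideal of `S`
generated by all homogeneous elements of nonzero degree together with `τ(S₁)`.  Thus
`R = S ⧸ kerNu` and `M ⊗_{S,ν} R = (S ⧸ kerNu) ⊗_S M`. -/
def kerNu {A : Type*} [CommRing A] (𝒜 : ℤ → AddSubgroup A) [GradedRing 𝒜]
    (τ : A →+* A) : Ideal A :=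
  Ideal.span ((⋃ (n : ℤ) (_ : n ≠ 0), (𝒜 n : Set A)) ∪ (τ '' (𝒜 1 : Set A)))


open DirectSum
set_option synthInstance.maxHeartbeats 400000
set_option maxHeartbeats 1000000

section Proj

variable {M : Type*} [AddCommGroup M] (ℳ : ℤ → AddSubgroup M) (hM : DirectSum.IsInternal ℳ)

/-- The additive equivalence `⨁ n, ℳ n ≃+ M` coming from internality. -/
noncomputable def gEquiv : (⨁ n : ℤ, ℳ n) ≃+ M :=
  AddEquiv.ofBijective (DirectSum.coeAddMonoidHom ℳ) hM

/-- Projection onto the degree-`n` component, as an additive monoid hom `M →+ M`. -/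
noncomputable def projHom (n : ℤ) : M →+ M where
  toFun x := (((gEquiv ℳ hM).symm x) n : M)
  map_zero' := by simp
  map_add' x y := by simp [map_add]

lemma proj_mem (n : ℤ) (x : M) : projHom ℳ hM n x ∈ ℳ n :=
  SetLike.coe_mem _

lemma gEquiv_of (n : ℤ) (v : ℳ n) : gEquiv ℳ hM (DirectSum.of (fun i => ℳ i) n v) = v :=
  DirectSum.coeAddMonoidHom_of ℳ n v

lemma gEquiv_symm_of_mem {n : ℤ} {x : M} (hx : x ∈ ℳ n) :
    (gEquiv ℳ hM).symm x = DirectSum.of (fun i => ℳ i) n ⟨x, hx⟩ := by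
  rw [AddEquiv.symm_apply_eq, gEquiv_of]

lemma proj_of_mem {n : ℤ} {x : M} (hx : x ∈ ℳ n) : projHom ℳ hM n x = x := by
  show (((gEquiv ℳ hM).symm x) n : M) = x
  rw [gEquiv_symm_of_mem ℳ hM hx, DirectSum.of_eq_same]

lemma proj_of_mem_ne {n m : ℤ} {x : M} (hx : x ∈ ℳ n) (hmn : m ≠ n) :
    projHom ℳ hM m x = 0 := by
  show (((gEquiv ℳ hM).symm x) m : M) = 0
  rw [gEquiv_symm_of_mem ℳ hM hx, DirectSum.of_eq_of_ne _ _ _ hmn]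
  rfl

lemma exists_proj_finset (x : M) :
    ∃ s : Finset ℤ, (∀ n ∉ s, projHom ℳ hM n x = 0) ∧ ∑ n ∈ s, projHom ℳ hM n x = x := by
  classical
  refine ⟨((gEquiv ℳ hM).symm x).support, fun n hn => ?_, ?_⟩
  · show ((((gEquiv ℳ hM).symm x)) n : M) = 0
    rw [DFinsupp.notMem_support_iff.mp hn]
    rfl
  · conv_rhs => rw [← (gEquiv ℳ hM).apply_symm_apply x]
    conv_rhs => rw [← DirectSum.sum_support_of ((gEquiv ℳ hM).symm x)]
    rw [map_sum]
    exact Finset.sum_congr rfl fun n _ => (gEquiv_of ℳ hM n _).symm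

lemma proj_sum (s : Finset ℤ) (y : ℤ → M) (hy : ∀ m ∈ s, y m ∈ ℳ m) (n : ℤ) :
    projHom ℳ hM n (∑ m ∈ s, y m) = if n ∈ s then y n else 0 := by
  classical
  rw [map_sum]
  rw [Finset.sum_congr rfl (fun m hm => show projHom ℳ hM n (y m) = if n = m then y m else 0
    from by
      by_cases h : n = m
      · subst h; rw [if_pos rfl]; exact proj_of_mem ℳ hM (hy n hm)
      · rw [if_neg h]; exact proj_of_mem_ne ℳ hM (hy m hm) h)]
  exact Finset.sum_ite_eq s n y

end Proj
section ProjModule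

variable {A : Type*} [CommRing A] (𝒜 : ℤ → AddSubgroup A) [GradedRing 𝒜]
variable {M : Type*} [AddCommGroup M] [Module A M] (ℳ : ℤ → AddSubgroup M)
variable (hM : DirectSum.IsInternal ℳ)

lemma le_of_proj_le {V W : Submodule A M} (h : ∀ n x, x ∈ V → projHom ℳ hM n x ∈ W) :
    V ≤ W := by
  intro v hv
  obtain ⟨s, _, hsum⟩ := exists_proj_finset ℳ hM v
  rw [← hsum]
  exact Submodule.sum_mem _ fun n _ => h n v hv

lemma proj_smul_homog (hsmul : ∀ (i j : ℤ), ∀ a ∈ 𝒜 i, ∀ x ∈ ℳ j, a • x ∈ ℳ (i + j)) {i : ℤ} {a : A} (ha : a ∈ 𝒜 i) (x : M) (n : ℤ) :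
    projHom ℳ hM n (a • x) = a • projHom ℳ hM (n - i) x := by
  classical
  obtain ⟨s, h0, hsum⟩ := exists_proj_finset ℳ hM x
  have hax : a • x = ∑ m ∈ s.image (· + i), a • projHom ℳ hM (m - i) x := by
    rw [Finset.sum_image (by intro u _ v _ h; have h' : u + i = v + i := h; omega)]
    simp only [add_sub_cancel_right]
    rw [← Finset.smul_sum, hsum]
  rw [hax, proj_sum ℳ hM _ _ (fun m _ => by
    have hmem := hsmul i (m - i) a ha _ (proj_mem ℳ hM (m - i) x)
    rwa [show i + (m - i) = m by omega] at hmem)]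
  by_cases hn : n ∈ s.image (· + i)
  · rw [if_pos hn]
  · rw [if_neg hn]
    have h1 : projHom ℳ hM (n - i) x = 0 :=
      h0 _ (fun hc => hn (Finset.mem_image.mpr ⟨n - i, hc, by omega⟩))
    rw [h1, smul_zero]

lemma proj_smul_sum (hsmul : ∀ (i j : ℤ), ∀ a ∈ 𝒜 i, ∀ x ∈ ℳ j, a • x ∈ ℳ (i + j)) (t : Finset ℤ) (c : ℤ → A) (hc : ∀ i ∈ t, c i ∈ 𝒜 i) (x : M) (n : ℤ) :
    projHom ℳ hM n ((∑ i ∈ t, c i) • x) = ∑ i ∈ t, c i • projHom ℳ hM (n - i) x := by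
  rw [Finset.sum_smul, map_sum]
  exact Finset.sum_congr rfl fun i hi => proj_smul_homog 𝒜 ℳ hM hsmul (hc i hi) x n

end ProjModule

section RingProj

variable {A : Type*} [CommRing A] (𝒜 : ℤ → AddSubgroup A) [GradedRing 𝒜]

lemma hAinternal : DirectSum.IsInternal 𝒜 := DirectSum.Decomposition.isInternal 𝒜

lemma hAsmul : ∀ (i j : ℤ), ∀ a ∈ 𝒜 i, ∀ x ∈ 𝒜 j, a • x ∈ 𝒜 (i + j) :=
  fun i j a ha x hx => by simpa [smul_eq_mul] using SetLike.mul_mem_graded ha hx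

/-- Projection of the ring onto its degree-`n` component. -/
noncomputable def projA (n : ℤ) : A →+ A := projHom 𝒜 (hAinternal 𝒜) n

end RingProj
section SemiFrameFacts

variable {A : Type*} [CommRing A] {𝒜 : ℤ → AddSubgroup A} [GradedRing 𝒜]

/-- The ideal generated by homogeneous elements of positive degree. -/
def Iplus (𝒜 : ℤ → AddSubgroup A) : Ideal A :=
  Ideal.span (⋃ (i : ℤ) (_ : 1 ≤ i), (𝒜 i : Set A))

lemma sf_exists_a (SF : SemiFrame 𝒜) : ∃ a ∈ 𝒜 (-1), SF.tau a = 1 := by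
  have h := SF.tau_surj_neg 1 le_rfl 1 (SetLike.one_mem_graded 𝒜)
  simpa using h

lemma sf_mul_a (SF : SemiFrame 𝒜) {a : A} (ha : a ∈ 𝒜 (-1)) (hτa : SF.tau a = 1)
    {s : A} (hs : s ∈ 𝒜 1) : a * s = SF.tau s := by
  have h0 : a * s ∈ 𝒜 0 := by
    have := SetLike.mul_mem_graded ha hs
    norm_num at this
    exact this
  have h1 : SF.tau (a * s) = a * s := SF.tau_id_zero _ h0
  rw [← h1, map_mul, hτa, one_mul]

lemma sf_neg_mem (SF : SemiFrame 𝒜) {a : A} (ha : a ∈ 𝒜 (-1)) (hτa : SF.tau a = 1)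
    {n : ℤ} (hn : n < 0) {c : A} (hc : c ∈ 𝒜 n) : c ∈ Ideal.span {a} := by
  obtain ⟨m, hm1, hmn⟩ : ∃ m : ℕ, 1 ≤ m ∧ (m : ℤ) = -n := ⟨(-n).toNat, by omega, by omega⟩
  have ham : a ^ m ∈ 𝒜 n := by
    have := SetLike.pow_mem_graded m ha
    rwa [show m • (-1 : ℤ) = n by rw [nsmul_eq_mul]; omega] at this
  have hτc : SF.tau c ∈ 𝒜 0 := SF.tau_mem_zero c
  have hprod : SF.tau c * a ^ m ∈ 𝒜 n := by
    have := SetLike.mul_mem_graded hτc ham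
    rwa [zero_add] at this
  have htb : SF.tau (SF.tau c * a ^ m) = SF.tau c := by
    rw [map_mul, map_pow, hτa, one_pow, mul_one]
    exact SF.tau_id_zero _ (SF.tau_mem_zero c)
  have heq : c = SF.tau c * a ^ m :=
    SF.tau_inj_neg m hm1 c (by rwa [show -(m : ℤ) = n by omega]) _
      (by rwa [show -(m : ℤ) = n by omega]) htb.symm
  obtain ⟨k, rfl⟩ : ∃ k, m = k + 1 := ⟨m - 1, by omega⟩
  rw [Ideal.mem_span_singleton']
  exact ⟨SF.tau c * a ^ k, by rw [mul_assoc, ← pow_succ, ← heq]⟩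

lemma sf_J_le (SF : SemiFrame 𝒜) {a : A} (ha : a ∈ 𝒜 (-1)) (hτa : SF.tau a = 1) :
    kerNu 𝒜 SF.tau ≤ Ideal.span {a} ⊔ Iplus 𝒜 := by
  rw [kerNu, Ideal.span_le]
  rintro x (hx | ⟨s, hs, rfl⟩)
  · obtain ⟨n, hn, hxn⟩ := Set.mem_iUnion₂.mp hx
    rcases lt_or_gt_of_ne hn with h | h
    · exact Submodule.mem_sup_left (sf_neg_mem SF ha hτa h hxn)
    · exact Submodule.mem_sup_right
        (Ideal.subset_span (Set.mem_iUnion₂.mpr ⟨n, h, hxn⟩))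
  · apply Submodule.mem_sup_left
    rw [Ideal.mem_span_singleton']
    exact ⟨s, by rw [mul_comm, sf_mul_a SF ha hτa hs]⟩

end SemiFrameFacts
section Nak

variable {A : Type*} [CommRing A] {𝒜 : ℤ → AddSubgroup A} [GradedRing 𝒜]
variable {M : Type*} [AddCommGroup M] [Module A M] {ℳ : ℤ → AddSubgroup M}

/-- Graded Nakayama lemma for semi-frames: if `V` is a finitely generated graded
submodule, `W` a graded submodule, and `V ≤ W + J•V` where `J = kerNu`, then `V ≤ W`. -/
theorem nak (SF : SemiFrame 𝒜) (hM : DirectSum.IsInternal ℳ)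
    (hsmul : ∀ (i j : ℤ), ∀ a ∈ 𝒜 i, ∀ x ∈ ℳ j, a • x ∈ ℳ (i + j))
    (V W : Submodule A M) (hVfg : V.FG)
    (hVg : ∀ n, ∀ x ∈ V, projHom ℳ hM n x ∈ V)
    (hWg : ∀ n, ∀ x ∈ W, projHom ℳ hM n x ∈ W)
    (hle : V ≤ W ⊔ (kerNu 𝒜 SF.tau) • V) : V ≤ W := by
  classical
  obtain ⟨a, ha, hτa⟩ := sf_exists_a SF
  set Ia := Ideal.span ({a} : Set A) with hIadef
  set Ip := Iplus 𝒜 with hIpdef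
  have hAint := hAinternal 𝒜
  have hAsm := hAsmul 𝒜
  have hprojA_neg : ∀ (c : A) (i : ℤ), i < 0 → projHom 𝒜 hAint i c ∈ Ia := fun c i hi =>
    sf_neg_mem SF ha hτa hi (proj_mem 𝒜 hAint i c)
  -- `Ia` is a graded ideal
  have hIag : ∀ c ∈ Ia, ∀ i, projHom 𝒜 hAint i c ∈ Ia := by
    intro c hc i
    rw [hIadef, Ideal.mem_span_singleton'] at hc
    obtain ⟨s, rfl⟩ := hc
    have h1 : s * a = a • s := by rw [smul_eq_mul, mul_comm]
    rw [h1, proj_smul_homog 𝒜 𝒜 hAint hAsm ha, hIadef, Ideal.mem_span_singleton']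
    exact ⟨projHom 𝒜 hAint (i - -1) s, by rw [mul_comm, ← smul_eq_mul]⟩
  have hle2 : V ≤ (W ⊔ Ia • V) ⊔ Ip • V := by
    refine hle.trans ?_
    have h1 : (kerNu 𝒜 SF.tau) • V ≤ Ia • V ⊔ Ip • V := by
      rw [← Submodule.sup_smul]
      exact Submodule.smul_mono_left (sf_J_le SF ha hτa)
    calc W ⊔ kerNu 𝒜 SF.tau • V ≤ W ⊔ (Ia • V ⊔ Ip • V) := sup_le_sup_left h1 _
      _ = (W ⊔ Ia • V) ⊔ Ip • V := (sup_assoc _ _ _).symm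
  set W' := W ⊔ Ia • V with hW'def
  have hIaVg : ∀ q ∈ Ia • V, ∀ n, projHom ℳ hM n q ∈ Ia • V := by
    intro q hq
    refine Submodule.smul_induction_on hq ?_ ?_
    · intro c hc v hv n
      obtain ⟨t, ht0, htsum⟩ := exists_proj_finset 𝒜 hAint c
      rw [← htsum, proj_smul_sum 𝒜 ℳ hM hsmul t _ (fun i _ => proj_mem 𝒜 hAint i c)]
      exact Submodule.sum_mem _ fun i _ =>
        Submodule.smul_mem_smul (hIag c hc i) (hVg _ _ hv)
    · intro x y hx hy n
      rw [map_add]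
      exact Submodule.add_mem _ (hx n) (hy n)
  have hW'g : ∀ n, ∀ x ∈ W', projHom ℳ hM n x ∈ W' := by
    intro n x hx
    obtain ⟨w, hw, p, hp, rfl⟩ := Submodule.mem_sup.mp hx
    rw [map_add]
    exact Submodule.add_mem _ (Submodule.mem_sup_left (hWg n w hw))
      (Submodule.mem_sup_right (hIaVg p hp n))
  -- the auxiliary submodules of "positively-shifted" elements
  set Z : ℤ → Submodule A M := fun m => Submodule.span A
      {x : M | ∃ i : ℤ, 1 ≤ i ∧ ∃ s ∈ 𝒜 i, ∃ u ∈ V, u ∈ ℳ (m - i) ∧ x = s • u} with hZdef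
  have hZsmul : ∀ (i : ℤ) (b : A), b ∈ 𝒜 i → ∀ (m : ℤ) (z : M), z ∈ Z (m - i) →
      b • z ∈ Z m := by
    intro i b hb m z hz
    induction hz using Submodule.span_induction with
    | mem x hx =>
      obtain ⟨j, hj, s, hs, u, huV, hum, rfl⟩ := hx
      rw [smul_comm]
      refine Submodule.subset_span ⟨j, hj, s, hs, b • u, Submodule.smul_mem _ _ huV, ?_, rfl⟩
      have := hsmul i (m - i - j) b hb u hum
      rwa [show i + (m - i - j) = m - j by omega] at this
    | zero => rw [smul_zero]; exact Submodule.zero_mem _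
    | add x y hx hy ihx ihy => rw [smul_add]; exact Submodule.add_mem _ ihx ihy
    | smul t x hx ih => rw [smul_comm]; exact Submodule.smul_mem _ _ ih
  have hZproj : ∀ q ∈ Ip • V, ∀ m, projHom ℳ hM m q ∈ Z m := by
    intro q hq
    refine Submodule.smul_induction_on hq ?_ ?_
    · intro c hc v₀ hv₀
      have hgen : ∀ m, projHom ℳ hM m (c • v₀) ∈ Z m := by
        rw [hIpdef, Iplus] at hc
        induction hc using Submodule.span_induction with
        | mem x hx =>
          obtain ⟨i, hi1, hxi⟩ := Set.mem_iUnion₂.mp hx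
          intro m
          rw [proj_smul_homog 𝒜 ℳ hM hsmul hxi]
          exact Submodule.subset_span
            ⟨i, hi1, x, hxi, _, hVg _ _ hv₀, proj_mem ℳ hM (m - i) v₀, rfl⟩
        | zero => intro m; rw [zero_smul, map_zero]; exact Submodule.zero_mem _
        | add c₁ c₂ h1 h2 ih1 ih2 =>
          intro m
          rw [add_smul, map_add]
          exact Submodule.add_mem _ (ih1 m) (ih2 m)
        | smul t c₁ hc₁ ih =>
          intro m
          rw [smul_eq_mul, mul_smul]
          obtain ⟨tt, htt0, httsum⟩ := exists_proj_finset 𝒜 hAint t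
          rw [← httsum, proj_smul_sum 𝒜 ℳ hM hsmul tt _ (fun i _ => proj_mem 𝒜 hAint i t)]
          exact Submodule.sum_mem _ fun i _ =>
            hZsmul i _ (proj_mem 𝒜 hAint i t) m _ (ih (m - i))
      exact hgen
    · intro x y hx hy m
      rw [map_add]
      exact Submodule.add_mem _ (hx m) (hy m)
  -- bound below for the degrees of generators
  obtain ⟨gens, hgens⟩ := hVfg
  have hbound : ∀ s : Finset M, ∃ n₀ : ℤ, ∀ x ∈ s, ∀ n < n₀, projHom ℳ hM n x = 0 := by
    intro s
    induction s using Finset.induction_on with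
    | empty => exact ⟨0, by simp⟩
    | @insert x s hxs ih =>
      obtain ⟨n₁, hn₁⟩ := ih
      obtain ⟨t, ht0, _⟩ := exists_proj_finset ℳ hM x
      have : ∃ n₂ : ℤ, ∀ n < n₂, n ∉ t := by
        by_cases h : t.Nonempty
        · exact ⟨t.min' h, fun n hn hc => absurd (t.min'_le n hc) (by omega)⟩
        · exact ⟨0, fun n _ hc => h ⟨n, hc⟩⟩
      obtain ⟨n₂, hn₂⟩ := this
      refine ⟨min n₁ n₂, fun y hy n hn => ?_⟩
      rcases Finset.mem_insert.mp hy with rfl | hy'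
      · exact ht0 n (hn₂ n (by omega))
      · exact hn₁ y hy' n (by omega)
  obtain ⟨n₀, hn₀⟩ := hbound gens
  -- main induction
  have main : ∀ k : ℕ, ∀ n : ℤ, n < n₀ + k → ∀ v ∈ V, v ∈ ℳ n → v ∈ W' := by
    intro k
    induction k with
    | zero =>
      intro n hn v hv hvn
      have hn' : n < n₀ := by push_cast at hn; omega
      refine Submodule.mem_sup_right ?_
      rw [← hgens] at hv
      obtain ⟨co, -, hco⟩ := Submodule.mem_span_finset.mp hv
      have hv' : v = ∑ x ∈ gens, projHom ℳ hM n (co x • x) := by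
        rw [← map_sum, hco, proj_of_mem ℳ hM hvn]
      rw [hv']
      refine Submodule.sum_mem _ fun x hx => ?_
      obtain ⟨t, ht0, htsum⟩ := exists_proj_finset 𝒜 hAint (co x)
      rw [← htsum, proj_smul_sum 𝒜 ℳ hM hsmul t _ (fun i _ => proj_mem 𝒜 hAint i (co x))]
      refine Submodule.sum_mem _ fun i _ => ?_
      by_cases hideg : n - i < n₀
      · rw [hn₀ x hx _ hideg, smul_zero]
        exact Submodule.zero_mem _
      · refine Submodule.smul_mem_smul (hprojA_neg (co x) i (by omega)) ?_
        refine hVg _ x ?_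
        rw [← hgens]
        exact Submodule.subset_span hx
    | succ k ih =>
      intro n hn v hv hvn
      by_cases hcase : n < n₀ + k
      · exact ih n hcase v hv hvn
      have hneq : n = n₀ + k := by push_cast at hn hcase ⊢; omega
      obtain ⟨w, hw, q, hq, hvwq⟩ := Submodule.mem_sup.mp (hle2 hv)
      have hv2 : v = projHom ℳ hM n w + projHom ℳ hM n q := by
        rw [← map_add, hvwq, proj_of_mem ℳ hM hvn]
      rw [hv2]
      refine Submodule.add_mem _ (hW'g n w hw) ?_
      have hZn : projHom ℳ hM n q ∈ Z n := hZproj q hq n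
      have hZle : Z n ≤ W' := by
        rw [hZdef]
        rw [Submodule.span_le]
        rintro x ⟨i, hi1, s, hs, u, huV, hum, rfl⟩
        exact Submodule.smul_mem _ s (ih (n - i) (by omega) u huV hum)
      exact hZle hZn
  have hVW' : V ≤ W' := by
    refine le_of_proj_le ℳ hM fun n x hx => ?_
    exact main ((n - n₀).toNat + 1) n (by omega) _ (hVg n x hx) (proj_mem ℳ hM n x)
  -- Step 2: kill the `Ia • V` part using the determinant trick and the radical condition
  have hVfg' : V.FG := ⟨gens, hgens⟩
  have hV'le : V.map W.mkQ ≤ Ia • V.map W.mkQ := by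
    rintro _ ⟨v, hv, rfl⟩
    obtain ⟨w, hw, p, hp, hwp⟩ := Submodule.mem_sup.mp (hVW' hv)
    have h1 : W.mkQ v = W.mkQ p := by
      rw [← hwp, map_add]
      have : W.mkQ w = 0 := by
        rw [Submodule.mkQ_apply, Submodule.Quotient.mk_eq_zero]
        exact hw
      rw [this, zero_add]
    rw [h1, ← Submodule.map_smul'']
    exact Submodule.mem_map_of_mem hp
  obtain ⟨r, hr1, hr0⟩ :=
    Submodule.exists_sub_one_mem_and_smul_eq_zero_of_fg_of_le_smul Ia _ (hVfg'.map _) hV'le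
  have hrW : ∀ v ∈ V, r • v ∈ W := by
    intro v hv
    have h1 : W.mkQ (r • v) = 0 := by
      rw [map_smul]
      exact hr0 _ (Submodule.mem_map_of_mem hv)
    rwa [Submodule.mkQ_apply, Submodule.Quotient.mk_eq_zero] at h1
  rw [hIadef, Ideal.mem_span_singleton'] at hr1
  obtain ⟨s₁, hs₁⟩ := hr1
  set s₁' := projHom 𝒜 hAint 1 s₁ with hs₁'def
  have hs₁'mem : s₁' ∈ 𝒜 1 := proj_mem 𝒜 hAint 1 s₁
  have hprojA0r : projHom 𝒜 hAint 0 r = SF.tau s₁' + 1 := by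
    have hr : r = a • s₁ + 1 := by rw [smul_eq_mul, mul_comm, hs₁]; ring
    rw [hr, map_add, proj_of_mem 𝒜 hAint (SetLike.one_mem_graded 𝒜),
      proj_smul_homog 𝒜 𝒜 hAint hAsm ha, show (0 : ℤ) - -1 = 1 by norm_num,
      smul_eq_mul, sf_mul_a SF ha hτa hs₁'mem]
  obtain ⟨z, hz0, hz⟩ := SF.tau_S1_rad s₁' hs₁'mem (-1) (neg_mem (SetLike.one_mem_graded 𝒜))
  have hzu : (SF.tau s₁' + 1) * z = 1 := by linear_combination hz
  have hWmem : ∀ n, ∀ v ∈ V, v ∈ ℳ n → v ∈ W := by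
    intro n v hv hvn
    have h2 : projHom ℳ hM n (r • v) ∈ W := hWg n _ (hrW v hv)
    obtain ⟨t, ht0, htsum⟩ := exists_proj_finset 𝒜 hAint r
    rw [← htsum, proj_smul_sum 𝒜 ℳ hM hsmul t _ (fun i _ => proj_mem 𝒜 hAint i r)] at h2
    have h3 : ∑ i ∈ t, projHom 𝒜 hAint i r • projHom ℳ hM (n - i) v
        = projHom 𝒜 hAint 0 r • projHom ℳ hM (n - 0) v := by
      refine Finset.sum_eq_single 0 (fun b _ hb => ?_) (fun h0 => ?_)
      · rw [proj_of_mem_ne ℳ hM hvn (by omega), smul_zero]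
      · rw [ht0 0 h0, zero_smul]
    rw [h3, show n - 0 = n by omega, proj_of_mem ℳ hM hvn, hprojA0r] at h2
    have h5 : v = z • ((SF.tau s₁' + 1) • v) := by
      rw [← mul_smul, mul_comm, hzu, one_smul]
    rw [h5]
    exact Submodule.smul_mem _ _ h2
  exact le_of_proj_le ℳ hM fun n x hx => hWmem n _ (hVg n x hx) (proj_mem ℳ hM n x)

end Nak

open TensorProduct in
/-- Let `(S, τ)` be a semi-frame for `R = S₀/τ(S₁)`, let `M` be a
finitely generated graded `S`-module that is projective as an `S`-module, and let `N`
be a finitely generated graded `S`-module.  A homomorphism `f : N → M` of graded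
`S`-modules is bijective iff its reduction `f̄ : N ⊗_{S,ν} R → M ⊗_{S,ν} R` is
bijective. -/
theorem gradedModuleHom_bijective_iff_baseChange_bijective
    {A : Type*} [CommRing A] (𝒜 : ℤ → AddSubgroup A) [GradedRing 𝒜]
    (SF : SemiFrame 𝒜)
    {M : Type*} [AddCommGroup M] [Module A M]
    (ℳ : ℤ → AddSubgroup M)
    (hMinternal : DirectSum.IsInternal ℳ)
    (hMgradedSMul : ∀ (i j : ℤ), ∀ a ∈ 𝒜 i, ∀ x ∈ ℳ j, a • x ∈ ℳ (i + j))
    [Module.Finite A M] [Module.Projective A M]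
    {N : Type*} [AddCommGroup N] [Module A N]
    (𝒩 : ℤ → AddSubgroup N)
    (hNinternal : DirectSum.IsInternal 𝒩)
    (hNgradedSMul : ∀ (i j : ℤ), ∀ a ∈ 𝒜 i, ∀ x ∈ 𝒩 j, a • x ∈ 𝒩 (i + j))
    [Module.Finite A N]
    (f : N →ₗ[A] M)
    (hfgraded : ∀ n : ℤ, ∀ x ∈ 𝒩 n, f x ∈ ℳ n) :
    Function.Bijective f ↔
      Function.Bijective (LinearMap.baseChange (A ⧸ kerNu 𝒜 SF.tau) f) := by
  classical
  set J := kerNu 𝒜 SF.tau with hJdef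
  -- `f` commutes with projections onto graded pieces
  have hproj_f : ∀ (n : ℤ) (x : N),
      projHom ℳ hMinternal n (f x) = f (projHom 𝒩 hNinternal n x) := by
    intro n x
    obtain ⟨s, h0, hsum⟩ := exists_proj_finset 𝒩 hNinternal x
    have h1 : f x = ∑ m ∈ s, f (projHom 𝒩 hNinternal m x) := by rw [← map_sum, hsum]
    rw [h1, proj_sum ℳ hMinternal s _ (fun m _ => hfgraded m _ (proj_mem 𝒩 hNinternal m x))]
    by_cases hn : n ∈ s
    · rw [if_pos hn]
    · rw [if_neg hn, h0 n hn, map_zero]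
  -- the reduction of `f` modulo `J`, as a map of quotient modules
  have hmapQle : (J • ⊤ : Submodule A N) ≤ Submodule.comap f (J • ⊤ : Submodule A M) := by
    rw [← Submodule.map_le_iff_le_comap, Submodule.map_smul'']
    exact Submodule.smul_mono le_rfl le_top
  set F : N ⧸ (J • ⊤ : Submodule A N) →ₗ[A] M ⧸ (J • ⊤ : Submodule A M) :=
    Submodule.mapQ _ _ f hmapQle with hFdef
  have hFmk : ∀ x : N, F (Submodule.Quotient.mk x) = Submodule.Quotient.mk (f x) := by
    intro x
    rw [hFdef, Submodule.mapQ_apply]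
  set eN := TensorProduct.quotTensorEquivQuotSMul N J with heNdef
  set eM := TensorProduct.quotTensorEquivQuotSMul M J with heMdef
  have hcomm : ∀ x : (A ⧸ J) ⊗[A] N,
      eM (LinearMap.baseChange (A ⧸ J) f x) = F (eN x) := by
    intro x
    induction x using TensorProduct.induction_on with
    | zero => simp
    | tmul c n =>
      obtain ⟨c', rfl⟩ := Ideal.Quotient.mk_surjective c
      rw [LinearMap.baseChange_tmul, heMdef, heNdef,
        TensorProduct.quotTensorEquivQuotSMul_mk_tmul,
        TensorProduct.quotTensorEquivQuotSMul_mk_tmul, hFmk, map_smul]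
    | add x y hx hy =>
      rw [map_add, map_add, map_add, map_add, hx, hy]
  have hbij : Function.Bijective (LinearMap.baseChange (A ⧸ J) f) ↔ Function.Bijective F := by
    have hF : (F : N ⧸ (J • ⊤ : Submodule A N) → M ⧸ (J • ⊤ : Submodule A M)) =
        (eM : (A ⧸ J) ⊗[A] M → M ⧸ (J • ⊤ : Submodule A M)) ∘
          (LinearMap.baseChange (A ⧸ J) f) ∘
          (eN.symm : N ⧸ (J • ⊤ : Submodule A N) → (A ⧸ J) ⊗[A] N) := by
      funext y
      rw [Function.comp_apply, Function.comp_apply, hcomm, eN.apply_symm_apply]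
    constructor
    · intro h
      rw [hF]
      exact (EquivLike.bijective eM).comp (h.comp (EquivLike.bijective eN.symm))
    · intro h
      have hbc : (LinearMap.baseChange (A ⧸ J) f : (A ⧸ J) ⊗[A] N → (A ⧸ J) ⊗[A] M) =
          (eM.symm : M ⧸ (J • ⊤ : Submodule A M) → (A ⧸ J) ⊗[A] M) ∘
            (F : N ⧸ (J • ⊤ : Submodule A N) → M ⧸ (J • ⊤ : Submodule A M)) ∘
            (eN : (A ⧸ J) ⊗[A] N → N ⧸ (J • ⊤ : Submodule A N)) := by
        funext x
        rw [Function.comp_apply, Function.comp_apply, ← hcomm, eM.symm_apply_apply]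
      rw [hbc]
      exact (EquivLike.bijective eM.symm).comp (h.comp (EquivLike.bijective eN))
  rw [hbij]
  constructor
  · -- forward direction
    intro hf
    set e := LinearEquiv.ofBijective f hf with hedef
    have he : ∀ x, e x = f x := fun _ => rfl
    constructor
    · intro x y hxy
      obtain ⟨x', rfl⟩ := Submodule.mkQ_surjective _ x
      obtain ⟨y', rfl⟩ := Submodule.mkQ_surjective _ y
      rw [Submodule.mkQ_apply, Submodule.mkQ_apply, hFmk, hFmk, Submodule.Quotient.eq] at hxy
      rw [Submodule.mkQ_apply, Submodule.mkQ_apply, Submodule.Quotient.eq]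
      -- f x' - f y' ∈ J • ⊤, i.e. f (x' - y') ∈ J • ⊤ = map f (J • ⊤) levels
      have h1 : f (x' - y') ∈ (J • ⊤ : Submodule A M) := by rwa [map_sub]
      have h2 : (J • ⊤ : Submodule A M) = Submodule.map f (J • ⊤ : Submodule A N) := by
        rw [Submodule.map_smul'', Submodule.map_top, LinearMap.range_eq_top.mpr hf.surjective]
      rw [h2] at h1
      obtain ⟨u, hu, hueq⟩ := h1
      have : x' - y' = u := hf.injective hueq.symm
      rwa [this]
    · intro y
      obtain ⟨y', rfl⟩ := Submodule.mkQ_surjective _ y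
      obtain ⟨x, hx⟩ := hf.surjective y'
      exact ⟨Submodule.Quotient.mk x, by rw [hFmk, hx, Submodule.mkQ_apply]⟩
  · -- backward direction
    intro hFbij
    -- Surjectivity of `f`
    have hsurj : Function.Surjective f := by
      have htop : (⊤ : Submodule A M) ≤ LinearMap.range f ⊔ J • ⊤ := by
        intro m _
        obtain ⟨q, hq⟩ := hFbij.surjective (Submodule.Quotient.mk m)
        obtain ⟨x, rfl⟩ := Submodule.mkQ_surjective _ q
        rw [Submodule.mkQ_apply, hFmk, Submodule.Quotient.eq] at hq
        have hm : m = f x + (m - f x) := by abel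
        rw [hm]
        refine Submodule.add_mem _ (Submodule.mem_sup_left ⟨x, rfl⟩)
          (Submodule.mem_sup_right ?_)
        have : -(f x - m) = m - f x := by abel
        exact this ▸ Submodule.neg_mem _ hq
      have hnak := nak SF hMinternal hMgradedSMul ⊤ (LinearMap.range f) Module.Finite.fg_top
        (fun n x _ => Submodule.mem_top)
        (fun n x hx => by
          obtain ⟨y, rfl⟩ := hx
          exact ⟨projHom 𝒩 hNinternal n y, (hproj_f n y).symm⟩)
        (le_trans htop le_rfl)
      exact LinearMap.range_eq_top.mp (top_le_iff.mp hnak)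
    -- Injectivity of `f`: split off the kernel using projectivity
    obtain ⟨g, hg⟩ := Module.projective_lifting_property f LinearMap.id hsurj
    have hfg_id : ∀ m, f (g m) = m := fun m => LinearMap.congr_fun hg m
    set K := LinearMap.ker f with hKdef
    set G := LinearMap.range g with hGdef
    have hKfg : K.FG := by
      have hKeq : K = LinearMap.range (LinearMap.id - g.comp f) := by
        ext x
        constructor
        · intro hx
          refine ⟨x, ?_⟩
          have hx0 : f x = 0 := LinearMap.mem_ker.mp hx
          simp [LinearMap.sub_apply, hx0]
        · rintro ⟨y, rfl⟩
          rw [LinearMap.mem_ker]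
          simp [LinearMap.sub_apply, hfg_id]
      rw [hKeq, LinearMap.range_eq_map]
      exact Submodule.FG.map _ Module.Finite.fg_top
    have hKg : ∀ n, ∀ x ∈ K, projHom 𝒩 hNinternal n x ∈ K := by
      intro n x hx
      rw [hKdef, LinearMap.mem_ker, ← hproj_f, LinearMap.mem_ker.mp hx, map_zero]
    have hKJ : K ≤ (J • ⊤ : Submodule A N) := by
      intro x hx
      have h1 : F (Submodule.Quotient.mk x) = 0 := by
        rw [hFmk, LinearMap.mem_ker.mp hx, Submodule.Quotient.mk_eq_zero]
        exact Submodule.zero_mem _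
      have h2 : (Submodule.Quotient.mk x : N ⧸ (J • ⊤ : Submodule A N)) = 0 :=
        hFbij.injective (by rw [h1, map_zero])
      rwa [Submodule.Quotient.mk_eq_zero] at h2
    have htopNG : (⊤ : Submodule A N) ≤ K ⊔ G := by
      intro x _
      have hx : x = (x - g (f x)) + g (f x) := by abel
      rw [hx]
      refine Submodule.add_mem _ (Submodule.mem_sup_left ?_)
        (Submodule.mem_sup_right ⟨f x, rfl⟩)
      rw [hKdef, LinearMap.mem_ker, map_sub, hfg_id, sub_self]
    have hKG : ∀ x, x ∈ K → x ∈ G → x = 0 := by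
      rintro x hxK ⟨m, rfl⟩
      have : m = 0 := by rw [← hfg_id m]; exact LinearMap.mem_ker.mp hxK
      rw [this, map_zero]
    have hKJK : K ≤ J • K := by
      intro x hx
      have h1 : x ∈ J • (K ⊔ G) := Submodule.smul_mono le_rfl htopNG (hKJ hx)
      rw [Submodule.smul_sup] at h1
      obtain ⟨u, hu, w, hw, hx2⟩ := Submodule.mem_sup.mp h1
      have hwK : w ∈ K := by
        have hw' : w = x - u := by rw [← hx2]; abel
        rw [hw']
        exact K.sub_mem hx (Submodule.smul_le_right hu)
      have hwG : w ∈ G := Submodule.smul_le_right hw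
      rw [← hx2, hKG w hwK hwG, add_zero]
      exact hu
    have hknak := nak SF hNinternal hNgradedSMul K ⊥ hKfg hKg
      (fun n x hx => by rw [(Submodule.mem_bot A).mp hx, map_zero]; exact Submodule.zero_mem _)
      (le_trans hKJK le_sup_right)
    exact ⟨LinearMap.ker_eq_bot.mp (le_bot_iff.mp hknak), hsurj⟩
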